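/- Let 3 ≤ m ≤ n < ω and 1 ≤ r < ω. Suppose f, g ∈ F(m,n,r), x ≠ y < m, and f(u,v) = g(u,v) for all u,v ∈ m \ {x,y} (i.e., f ≡_{x,y} g). Then there exists h ∈ F(m,n,r) with h ≡_x f and h ≡_y g (h agrees with f off x and with g off y). Consequently, cylindrifiers commute in C(m,n,r): c_x c_y X = c_y c_x X for all X ⊆ F(m,n,r). -/

import Mathlib

/-- `Bin(n, J)` with ψ atoms per pair: `Id` together with the symbols
`a^k(i, j)` for `k < ψ`, `i < n - 1`, `j ∈ J`. -/
inductive Bin (n ψ : ℕ) (J : Type*) where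
  | id : Bin n ψ J
  | a (k : Fin ψ) (i : Fin (n - 1)) (j : J) : Bin n ψ J

/-- The forbidden triples. -/
def Forb {n ψ : ℕ} {J : Type*} [LinearOrder J] :
    Set (Bin n ψ J × Bin n ψ J × Bin n ψ J) :=
  {t | (∃ b c, b ≠ c ∧ t = (Bin.id, b, c)) ∨
       (∃ k k' k'' i j j', j' ≤ j ∧ t = (Bin.a k i j, Bin.a k' i j, Bin.a k'' i j'))}

/-- `f` is an admissible edge-labelling on `m`, i.e. a member of `F(m, n, J)`. -/
def IsF {n ψ : ℕ} {J : Type*} [LinearOrder J] (m : ℕ)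
    (f : Fin m → Fin m → Bin n ψ J) : Prop :=
  (∀ x, f x x = Bin.id) ∧ (∀ x y, f x y = f y x) ∧
  (∀ x y z, (f x y, f y z, f x z) ∉ Forb)

def kappa : ℕ → ℕ → ℕ
  | _, 0 => 0
  | x, y + 1 => 1 + x * kappa x y

def psi (n r : ℕ) : ℕ := kappa ((n - 1) * r) ((n - 1) * r) + 1

/-- The elements of `F(m, n, J)` as a subtype: the base of `C(m,n,J)` is its
power set. -/
def FF (m n ψ : ℕ) (J : Type*) [LinearOrder J] :=
  {f : Fin m → Fin m → Bin n ψ J // IsF m f}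

/-- `f ≡_x g`: `f` and `g` agree on all pairs not involving `x`. -/
def eqEx {n ψ m : ℕ} {J : Type*} [LinearOrder J] (x : Fin m)
    (f g : Fin m → Fin m → Bin n ψ J) : Prop :=
  ∀ u v, u ≠ x → v ≠ x → f u v = g u v

/-- The cylindrifier of `C(m, n, J)`. -/
def cyl {m n ψ : ℕ} {J : Type*} [LinearOrder J] (x : Fin m)
    (X : Set (FF m n ψ J)) : Set (FF m n ψ J) :=
  {f | ∃ g ∈ X, eqEx x f.1 g.1}

section Aux

variable {n ψ : ℕ} {J : Type*} [LinearOrder J]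

lemma nfCongr {t1 t2 t3 s1 s2 s3 : Bin n ψ J} (h : (t1, t2, t3) ∉ Forb)
    (e1 : t1 = s1) (e2 : t2 = s2) (e3 : t3 = s3) : (s1, s2, s3) ∉ Forb := by
  subst e1; subst e2; subst e3; exact h

lemma not_forb_eeid (e : Bin n ψ J) : (e, e, Bin.id) ∉ Forb := by
  intro hmem
  simp only [Forb, Set.mem_setOf_eq] at hmem
  rcases hmem with ⟨b, c, hbc, ht⟩ | ⟨k, k', k'', i, j, j', hle, ht⟩ <;>
    simp only [Prod.mk.injEq] at ht
  · exact hbc (ht.2.1.symm.trans (ht.1.trans ht.2.2))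
  · exact nomatch ht.2.2

lemma not_forb_eide (e : Bin n ψ J) : (e, Bin.id, e) ∉ Forb := by
  intro hmem
  simp only [Forb, Set.mem_setOf_eq] at hmem
  rcases hmem with ⟨b, c, hbc, ht⟩ | ⟨k, k', k'', i, j, j', hle, ht⟩ <;>
    simp only [Prod.mk.injEq] at ht
  · exact hbc (ht.2.1.symm.trans (ht.1.symm.trans ht.2.2))
  · exact nomatch ht.2.1

lemma not_forb_idee (e : Bin n ψ J) : (Bin.id, e, e) ∉ Forb := by
  intro hmem
  simp only [Forb, Set.mem_setOf_eq] at hmem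
  rcases hmem with ⟨b, c, hbc, ht⟩ | ⟨k, k', k'', i, j, j', hle, ht⟩ <;>
    simp only [Prod.mk.injEq] at ht
  · exact hbc (ht.2.1.symm.trans ht.2.2)
  · exact nomatch ht.1

/-- All six orderings of `(e, b, c)` avoid `Forb`. -/
def Safe6 (e b c : Bin n ψ J) : Prop :=
  (e, b, c) ∉ Forb ∧ (e, c, b) ∉ Forb ∧ (b, e, c) ∉ Forb ∧
  (c, e, b) ∉ Forb ∧ (b, c, e) ∉ Forb ∧ (c, b, e) ∉ Forb

lemma safe6_swap {e b c : Bin n ψ J} (h : Safe6 e b c) : Safe6 e c b :=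
  ⟨h.2.1, h.1, h.2.2.2.1, h.2.2.1, h.2.2.2.2.2, h.2.2.2.2.1⟩

lemma not_forb_c3 (p q s : Bin n ψ J) (hp : p ≠ Bin.id)
    (hpq : ∀ i : Fin (n - 1), (∃ k j, p = Bin.a k i j) → (∃ k j, q = Bin.a k i j) →
      (∃ k j, s = Bin.a k i j) → False) : (p, q, s) ∉ Forb := by
  intro hmem
  simp only [Forb, Set.mem_setOf_eq] at hmem
  rcases hmem with ⟨b, c, hbc, ht⟩ | ⟨k, k', k'', i, j, j', hle, ht⟩ <;>
    simp only [Prod.mk.injEq] at ht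
  · exact hp ht.1
  · exact hpq i ⟨k, j, ht.1⟩ ⟨k', j, ht.2.1⟩ ⟨k'', j', ht.2.2⟩

lemma a_i_eq {k k' : Fin ψ} {i i' : Fin (n - 1)} {j j' : J}
    (h : (Bin.a k i j : Bin n ψ J) = Bin.a k' i' j') : i = i' := by
  cases h; rfl

lemma safe6_case3 (ke kb : Fin ψ) (ie ib : Fin (n - 1)) (je jb : J) (c : Bin n ψ J)
    (hib : ib ≠ ie) (hc : c ≠ Bin.id) :
    Safe6 (Bin.a ke ie je) (Bin.a kb ib jb) c := by
  have key : ∀ i : Fin (n - 1),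
      (∃ k j, (Bin.a ke ie je : Bin n ψ J) = Bin.a k i j) →
      (∃ k j, (Bin.a kb ib jb : Bin n ψ J) = Bin.a k i j) → False := by
    rintro i ⟨_, _, h1⟩ ⟨_, _, h2⟩
    exact hib ((a_i_eq h2).trans (a_i_eq h1).symm)
  refine ⟨?_, ?_, ?_, ?_, ?_, ?_⟩
  · exact not_forb_c3 _ _ _ (fun h => nomatch h) (fun i he hb _ => key i he hb)
  · exact not_forb_c3 _ _ _ (fun h => nomatch h) (fun i he _ hb => key i he hb)
  · exact not_forb_c3 _ _ _ (fun h => nomatch h) (fun i hb he _ => key i he hb)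
  · exact not_forb_c3 _ _ _ hc (fun i _ he hb => key i he hb)
  · exact not_forb_c3 _ _ _ (fun h => nomatch h) (fun i hb _ he => key i he hb)
  · exact not_forb_c3 _ _ _ hc (fun i _ hb he => key i he hb)

lemma safe6_tri {m : ℕ} (g : Fin m → Fin m → Bin n ψ J) (hg : IsF m g) (p q s : Fin m) :
    Safe6 (g p q) (g q s) (g p s) := by
  obtain ⟨-, hsym, htri⟩ := hg
  exact ⟨htri p q s,
    nfCongr (htri q p s) (hsym q p) rfl rfl,
    nfCongr (htri s q p) (hsym s q) (hsym q p) (hsym s p),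
    nfCongr (htri s p q) (hsym s p) rfl (hsym s q),
    nfCongr (htri q s p) rfl (hsym s p) (hsym q p),
    nfCongr (htri p s q) rfl (hsym s q) rfl⟩

/-- The amalgamation lemma: given a value `e` for the missing edge `{x, y}`
avoiding all forbidden configurations, the amalgam exists. -/
lemma amalg {m : ℕ} (f g : Fin m → Fin m → Bin n ψ J) (hf : IsF m f) (hg : IsF m g)
    (x y : Fin m) (hxy : x ≠ y)
    (agr : ∀ u v, u ≠ x → u ≠ y → v ≠ x → v ≠ y → f u v = g u v)
    (e : Bin n ψ J)
    (hsafe : ∀ z, z ≠ x → z ≠ y → Safe6 e (f y z) (g x z)) :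
    ∃ h : Fin m → Fin m → Bin n ψ J, IsF m h ∧ eqEx x h f ∧ eqEx y h g := by
  obtain ⟨hfid, hfsym, hftri⟩ := hf
  obtain ⟨hgid, hgsym, hgtri⟩ := hg
  set h : Fin m → Fin m → Bin n ψ J :=
    fun u v => if u = x ∨ v = x then (if u = y ∨ v = y then e else g u v) else f u v
    with hdef
  have hyx : y ≠ x := Ne.symm hxy
  have L1 : ∀ u v : Fin m, u ≠ x → v ≠ x → h u v = f u v := by
    intro u v hu hv; simp [hdef, hu, hv]
  have L2 : ∀ u v : Fin m, u ≠ y → v ≠ y → h u v = g u v := by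
    intro u v hu hv
    by_cases hx' : u = x ∨ v = x
    · simp [hdef, hx', hu, hv]
    · push_neg at hx'
      rw [L1 u v hx'.1 hx'.2]
      exact agr u v hx'.1 hu hx'.2 hv
  have L3 : h x y = e := by simp [hdef]
  have L3' : h y x = e := by simp [hdef]
  have L4 : h x x = Bin.id := by simp [hdef, hxy, hgid x]
  have hyy : h y y = Bin.id := by rw [L1 y y hyx hyx]; exact hfid y
  refine ⟨h, ⟨?_, ?_, ?_⟩, L1, L2⟩
  · intro z
    by_cases hz : z = x
    · rw [hz]; exact L4
    · rw [L1 z z hz hz]; exact hfid z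
  · intro u v
    by_cases hux : u = x
    · by_cases hvx : v = x
      · rw [hux, hvx]
      · by_cases hvy : v = y
        · rw [hux, hvy, L3, L3']
        · rw [hux, L2 x v hxy hvy, L2 v x hvy hxy]; exact hgsym x v
    · by_cases hvx : v = x
      · by_cases huy : u = y
        · rw [huy, hvx, L3, L3']
        · rw [hvx, L2 u x huy hxy, L2 x u hxy huy]; exact hgsym u x
      · rw [L1 u v hux hvx, L1 v u hvx hux]; exact hfsym u v
  · intro u v w
    by_cases hX : u ≠ x ∧ v ≠ x ∧ w ≠ x
    · rw [L1 u v hX.1 hX.2.1, L1 v w hX.2.1 hX.2.2, L1 u w hX.1 hX.2.2]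
      exact hftri u v w
    by_cases hY : u ≠ y ∧ v ≠ y ∧ w ≠ y
    · rw [L2 u v hY.1 hY.2.1, L2 v w hY.2.1 hY.2.2, L2 u w hY.1 hY.2.2]
      exact hgtri u v w
    simp only [ne_eq, not_and_or, not_not] at hX hY
    rcases hX with h1 | h1 | h1 <;> rcases hY with h2 | h2 | h2
    · exact absurd (h1.symm.trans h2) hxy
    · -- u = x, v = y
      rw [h1, h2]
      by_cases hw : w = x
      · rw [hw, L3, L3', L4]; exact not_forb_eeid e
      by_cases hw' : w = y
      · rw [hw', L3, hyy]; exact not_forb_eide e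
      · rw [L3, L1 y w hyx hw, L2 x w hxy hw']
        exact (hsafe w hw hw').1
    · -- u = x, w = y
      rw [h1, h2]
      by_cases hv : v = x
      · rw [hv, L4, L3]; exact not_forb_idee e
      by_cases hv' : v = y
      · rw [hv', L3, hyy]; exact not_forb_eide e
      · rw [L3, L2 x v hxy hv', L1 v y hv hyx, hfsym v y]
        exact (hsafe v hv hv').2.2.2.2.2
    · -- v = x, u = y
      rw [h1, h2]
      by_cases hw : w = x
      · rw [hw, L3', L4]; exact not_forb_eide e
      by_cases hw' : w = y
      · rw [hw', L3', L3, hyy]; exact not_forb_eeid e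
      · rw [L3', L2 x w hxy hw', L1 y w hyx hw]
        exact (hsafe w hw hw').2.1
    · exact absurd (h1.symm.trans h2) hxy
    · -- v = x, w = y
      rw [h1, h2]
      by_cases hu : u = x
      · rw [hu, L4, L3]; exact not_forb_idee e
      by_cases hu' : u = y
      · rw [hu', L3', L3, hyy]; exact not_forb_eeid e
      · rw [L2 u x hu' hxy, hgsym u x, L3, L1 u y hu hyx, hfsym u y]
        exact (hsafe u hu hu').2.2.2.1
    · -- w = x, u = y
      rw [h1, h2]
      by_cases hv : v = x
      · rw [hv, L3', L4]; exact not_forb_eide e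
      by_cases hv' : v = y
      · rw [hv', hyy, L3']; exact not_forb_idee e
      · rw [L1 y v hyx hv, L2 v x hv' hxy, hgsym v x, L3']
        exact (hsafe v hv hv').2.2.2.2.1
    · -- w = x, v = y
      rw [h1, h2]
      by_cases hu : u = x
      · rw [hu, L3, L3', L4]; exact not_forb_eeid e
      by_cases hu' : u = y
      · rw [hu', hyy, L3']; exact not_forb_idee e
      · rw [L1 u y hu hyx, hfsym u y, L3', L2 u x hu' hxy, hgsym u x]
        exact (hsafe u hu hu').2.2.1
    · exact absurd (h1.symm.trans h2) hxy

end Aux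

/-- Extract the index `i` of an atom (with a default for `Id`). -/
def binIdx {n ψ : ℕ} {J : Type*} (d : Fin (n - 1)) : Bin n ψ J → Fin (n - 1)
  | .id => d
  | .a _ i _ => i

/-- Amalgamation in `F(m, n, r)` for `3 ≤ m ≤ n`, `1 ≤ r`, and the resulting
commutativity of cylindrifiers in `C(m, n, r)`. -/
theorem stmt_7 (m n r : ℕ) (hm : 3 ≤ m) (hmn : m ≤ n) (hr : 1 ≤ r) :
    (∀ f g : Fin m → Fin m → Bin n (psi n r) (Fin r), IsF m f → IsF m g →
      ∀ x y : Fin m, x ≠ y →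
      (∀ u v : Fin m, u ≠ x → u ≠ y → v ≠ x → v ≠ y → f u v = g u v) →
      ∃ h : Fin m → Fin m → Bin n (psi n r) (Fin r),
        IsF m h ∧ eqEx x h f ∧ eqEx y h g) ∧
    (∀ X : Set (FF m n (psi n r) (Fin r)), ∀ x y : Fin m,
      cyl x (cyl y X) = cyl y (cyl x X)) := by
  have hψ : 0 < psi n r := by unfold psi; omega
  have part1 : ∀ f g : Fin m → Fin m → Bin n (psi n r) (Fin r), IsF m f → IsF m g →
      ∀ x y : Fin m, x ≠ y →
      (∀ u v : Fin m, u ≠ x → u ≠ y → v ≠ x → v ≠ y → f u v = g u v) →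
      ∃ h : Fin m → Fin m → Bin n (psi n r) (Fin r),
        IsF m h ∧ eqEx x h f ∧ eqEx y h g := by
    intro f g hf hg x y hxy agr
    by_cases hc1 : ∃ z : Fin m, z ≠ x ∧ z ≠ y ∧ f y z = Bin.id
    · obtain ⟨z0, hz0x, hz0y, hz0⟩ := hc1
      have hfy : ∀ w, f y w = f z0 w := by
        intro w
        by_contra hne
        apply hf.2.2 y z0 w
        simp only [Forb, Set.mem_setOf_eq]
        exact Or.inl ⟨f z0 w, f y w, fun hh => hne hh.symm, by rw [hz0]⟩
      refine amalg f g hf hg x y hxy agr (g x z0) ?_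
      intro z hzx hzy
      have hb : f y z = g z0 z := (hfy z).trans (agr z0 z hz0x hz0y hzx hzy)
      rw [hb]
      exact safe6_tri g hg x z0 z
    by_cases hc2 : ∃ z : Fin m, z ≠ x ∧ z ≠ y ∧ g x z = Bin.id
    · obtain ⟨z0, hz0x, hz0y, hz0⟩ := hc2
      have hgx : ∀ w, g x w = g z0 w := by
        intro w
        by_contra hne
        apply hg.2.2 x z0 w
        simp only [Forb, Set.mem_setOf_eq]
        exact Or.inl ⟨g z0 w, g x w, fun hh => hne hh.symm, by rw [hz0]⟩
      refine amalg f g hf hg x y hxy agr (f y z0) ?_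
      intro z hzx hzy
      have hc : g x z = f z0 z := (hgx z).trans (agr z0 z hz0x hz0y hzx hzy).symm
      rw [hc]
      exact safe6_swap (safe6_tri f hf y z0 z)
    push_neg at hc1 hc2
    have hn1 : 0 < n - 1 := by omega
    set i0 : Fin (n - 1) := ⟨0, hn1⟩ with hi0
    set S : Finset (Fin (n - 1)) :=
      (Finset.univ.filter (fun z : Fin m => z ≠ x ∧ z ≠ y)).image
        (fun z => binIdx i0 (f y z)) with hS
    have hcard : S.card < n - 1 := by
      have h1 : S.card ≤ (Finset.univ.filter (fun z : Fin m => z ≠ x ∧ z ≠ y)).card :=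
        Finset.card_image_le
      have h2 : (Finset.univ.filter (fun z : Fin m => z ≠ x ∧ z ≠ y)) ⊆
          Finset.univ \ {x, y} := by
        intro z hz
        simp only [Finset.mem_filter, Finset.mem_univ, true_and] at hz
        simp only [Finset.mem_sdiff, Finset.mem_univ, true_and, Finset.mem_insert,
          Finset.mem_singleton]
        tauto
      have h3 : (Finset.univ \ ({x, y} : Finset (Fin m))).card = m - 2 := by
        rw [Finset.card_sdiff_of_subset (Finset.subset_univ _), Finset.card_pair hxy,
          Finset.card_univ, Fintype.card_fin]
      have h4 := Finset.card_le_card h2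
      omega
    have hex : ∃ i : Fin (n - 1), i ∉ S := by
      by_contra hcon
      push_neg at hcon
      have hsub : (Finset.univ : Finset (Fin (n - 1))) ⊆ S := fun i _ => hcon i
      have hle := Finset.card_le_card hsub
      rw [Finset.card_univ, Fintype.card_fin] at hle
      omega
    obtain ⟨iN, hiN⟩ := hex
    refine amalg f g hf hg x y hxy agr (Bin.a ⟨0, hψ⟩ iN ⟨0, hr⟩) ?_
    intro z hzx hzy
    cases hfyz : f y z with
    | id => exact absurd hfyz (hc1 z hzx hzy)
    | a kb ib jb =>
      have hmem : ib ∈ S := by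
        rw [hS]
        refine Finset.mem_image.2 ⟨z, ?_, ?_⟩
        · simp [hzx, hzy]
        · rw [hfyz]; rfl
      exact safe6_case3 _ kb iN ib _ jb (g x z) (fun hh => hiN (hh ▸ hmem)) (hc2 z hzx hzy)
  refine ⟨part1, ?_⟩
  have key : ∀ (x y : Fin m), x ≠ y → ∀ X : Set (FF m n (psi n r) (Fin r)),
      cyl x (cyl y X) ⊆ cyl y (cyl x X) := by
    intro x y hxy X ff hff
    obtain ⟨gg, hgg, hfg⟩ := hff
    obtain ⟨kk, hkX, hgk⟩ := hgg
    have agr : ∀ u v : Fin m, u ≠ x → u ≠ y → v ≠ x → v ≠ y → kk.1 u v = ff.1 u v := by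
      intro u v hux huy hvx hvy
      rw [← hgk u v huy hvy, ← hfg u v hux hvx]
    obtain ⟨h, hIsF, hx, hy⟩ := part1 kk.1 ff.1 kk.2 ff.2 x y hxy agr
    exact ⟨⟨h, hIsF⟩, ⟨kk, hkX, hx⟩, fun u v hu hv => (hy u v hu hv).symm⟩
  intro X x y
  by_cases hxy : x = y
  · subst hxy; rfl
  · exact Set.Subset.antisymm (key x y hxy X) (key y x (Ne.symm hxy) X)
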